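/- arXiv:1803.08938 — 2 statements merged into one kernel-verified Lean document; each statement's English description precedes it below -/
import Mathlib

section
/- Define the entire function Z₁ : ℂ → ℂ by Z₁(λ) = cos(π√(λ² − 1/4)) — equivalently Z₁(λ) = Σ_{n=0}^∞ (−1)ⁿ π^{2n} (λ² − 1/4)ⁿ/(2n)!, the value being independent of the branch of the square root since cosine is even. Then Z₁ is a generating function for phase shift at Fresnel number 𝔣 = 1: Z₁ is of sine-type, its zero set is exactly {√(k² + k + 1/2) : k ∈ ℕ} ∪ {−√(k² + k + 1/2) : k ∈ ℕ}, all zeros are real and simple, and each zero λ satisfies λ² = l + 1/2 with l = k² + k an integer. -/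
open MeasureTheory Complex Filter
open scoped FourierTransform Real Topology

noncomputable section

structure IsSineType (Z : ℂ → ℂ) : Prop where
  entire : Differentiable ℂ Z
  separated : ∃ c > 0, ∀ lam ∈ {z : ℂ | Z z = 0}, ∀ mu ∈ {z : ℂ | Z z = 0},
      lam ≠ mu → c ≤ ‖lam - mu‖
  bounds : ∃ A > 0, ∃ B > 0, ∃ H > 0, ∀ lam : ℂ, H ≤ |lam.im| →
      B * Real.exp (π * |lam.im|) ≤ ‖Z lam‖ ∧
      ‖Z lam‖ ≤ A * Real.exp (π * |lam.im|)

structure IsGeneratingPhase (f : ℝ) (Z : ℂ → ℂ) : Prop where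
  sineType : IsSineType Z
  realZeros : ∀ z : ℂ, Z z = 0 → ∃ x : ℝ, z = (x : ℂ)
  simpleZeros : ∀ z : ℂ, Z z = 0 → deriv Z z ≠ 0
  quantized : ∀ z : ℂ, Z z = 0 → ∃ l : ℤ, z ^ 2 = (f : ℂ) * ((l : ℂ) + 1 / 2)

namespace FresnelAux

lemma sq_half (c : ℂ) : (c ^ ((1:ℂ)/2)) ^ 2 = c := by
  have : ((1:ℂ)/2) = (((2:ℕ):ℂ))⁻¹ := by norm_num
  rw [this]
  exact Complex.cpow_nat_inv_pow c two_ne_zero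

lemma cos_branch {z w : ℂ} (h : w ^ 2 = z ^ 2 - 1/4) :
    Complex.cos ((π:ℂ) * (z ^ 2 - 1/4) ^ ((1:ℂ)/2)) = Complex.cos ((π:ℂ) * w) := by
  set s := (z ^ 2 - 1/4) ^ ((1:ℂ)/2) with hs
  have hsq : s ^ 2 = z ^ 2 - 1/4 := sq_half _
  have h2 : (s - w) * (s + w) = 0 := by linear_combination hsq - h
  rcases mul_eq_zero.1 h2 with h3 | h3
  · rw [sub_eq_zero.1 h3]
  · rw [show s = -w by linear_combination h3, mul_neg, Complex.cos_neg]

lemma natref (k : ℤ) : ∃ m : ℕ, (m:ℤ)^2 + m = k^2 + k := by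
  rcases le_or_gt 0 k with hk | hk
  · exact ⟨k.toNat, by rw [Int.toNat_of_nonneg hk]⟩
  · refine ⟨(-k-1).toNat, ?_⟩
    rw [Int.toNat_of_nonneg (by omega)]; ring

lemma zero_forward {z : ℂ} (h : Complex.cos ((π:ℂ) * (z^2 - 1/4) ^ ((1:ℂ)/2)) = 0) :
    ∃ k : ℕ, z = (Real.sqrt ((k:ℝ)^2 + k + 1/2) : ℂ) ∨ z = -(Real.sqrt ((k:ℝ)^2 + k + 1/2) : ℂ) := by
  rw [Complex.cos_eq_zero_iff] at h
  obtain ⟨k, hk⟩ := h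
  have hπ : (π:ℂ) ≠ 0 := Complex.ofReal_ne_zero.2 Real.pi_ne_zero
  have hs : (z^2 - 1/4) ^ ((1:ℂ)/2) = (k:ℂ) + 1/2 :=
    mul_left_cancel₀ hπ (hk.trans (by ring))
  have hz2 : z^2 = (k:ℂ)^2 + k + 1/2 := by
    have := sq_half (z^2 - 1/4)
    rw [hs] at this
    linear_combination -this
  obtain ⟨m, hm⟩ := natref k
  have hmC : (m:ℂ)^2 + m = (k:ℂ)^2 + k := by
    exact_mod_cast congrArg (fun n : ℤ => (n : ℂ)) hm
  have hr : (0:ℝ) ≤ (m:ℝ)^2 + m + 1/2 := by positivity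
  have hsq : ((Real.sqrt ((m:ℝ)^2 + m + 1/2) : ℝ) : ℂ)^2 = (((m:ℝ)^2 + m + 1/2 : ℝ) : ℂ) := by
    rw [← Complex.ofReal_pow, Real.sq_sqrt hr]
  have hfac : (z - (Real.sqrt ((m:ℝ)^2 + m + 1/2) : ℂ)) *
      (z + (Real.sqrt ((m:ℝ)^2 + m + 1/2) : ℂ)) = 0 := by
    have hz2' : z^2 = (((m:ℝ)^2 + m + 1/2 : ℝ) : ℂ) := by
      rw [hz2, ← hmC]; push_cast; ring
    linear_combination hz2' - hsq
  refine ⟨m, ?_⟩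
  rcases mul_eq_zero.1 hfac with h3 | h3
  · exact Or.inl (sub_eq_zero.1 h3)
  · exact Or.inr (by linear_combination h3)

lemma zero_backward (m : ℕ) {z : ℂ}
    (h : z = (Real.sqrt ((m:ℝ)^2 + m + 1/2) : ℂ) ∨ z = -(Real.sqrt ((m:ℝ)^2 + m + 1/2) : ℂ)) :
    Complex.cos ((π:ℂ) * (z^2 - 1/4) ^ ((1:ℂ)/2)) = 0 := by
  have hr : (0:ℝ) ≤ (m:ℝ)^2 + m + 1/2 := by positivity
  have hz2 : z^2 = (m:ℂ)^2 + m + 1/2 := by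
    have hsq : ((Real.sqrt ((m:ℝ)^2 + m + 1/2) : ℝ) : ℂ)^2 = (((m:ℝ)^2 + m + 1/2 : ℝ) : ℂ) := by
      rw [← Complex.ofReal_pow, Real.sq_sqrt hr]
    rcases h with h | h <;> rw [h]
    · rw [hsq]; push_cast; ring
    · rw [neg_pow, hsq]; push_cast; ring
  set s := (z^2 - 1/4) ^ ((1:ℂ)/2) with hsdef
  have hs2 : s ^ 2 = ((m:ℂ) + 1/2)^2 := by
    rw [hsdef, sq_half, hz2]; ring
  have hfac : (s - ((m:ℂ) + 1/2)) * (s + ((m:ℂ) + 1/2)) = 0 := by linear_combination hs2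
  rw [Complex.cos_eq_zero_iff]
  rcases mul_eq_zero.1 hfac with h3 | h3
  · exact ⟨m, by rw [sub_eq_zero.1 h3]; push_cast; ring⟩
  · exact ⟨-(m:ℤ)-1, by rw [show s = -((m:ℂ)+1/2) by linear_combination h3]; push_cast; ring⟩

lemma zero_sq {z : ℂ} (h : Complex.cos ((π:ℂ) * (z^2 - 1/4) ^ ((1:ℂ)/2)) = 0) :
    ∃ k : ℕ, z^2 = (((k:ℝ)^2 + k + 1/2 : ℝ) : ℂ) := by
  obtain ⟨k, hk⟩ := zero_forward h
  refine ⟨k, ?_⟩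
  have hr : (0:ℝ) ≤ (k:ℝ)^2 + k + 1/2 := by positivity
  rcases hk with h | h <;> rw [h]
  · rw [← Complex.ofReal_pow, Real.sq_sqrt hr]
  · rw [neg_sq, ← Complex.ofReal_pow, Real.sq_sqrt hr]

lemma contAux {c : ℂ} (hc : c^2 - 1/4 = 0) :
    ContinuousAt (fun z : ℂ => Complex.cos ((π:ℂ) * (z^2 - 1/4) ^ ((1:ℂ)/2))) c := by
  apply Complex.continuous_cos.continuousAt.comp
  apply continuousAt_const.mul
  unfold ContinuousAt
  rw [show (fun z : ℂ => (z^2 - 1/4) ^ ((1:ℂ)/2)) c = 0 by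
        show ((c^2 - 1/4 : ℂ)) ^ ((1:ℂ)/2) = 0
        rw [hc, Complex.zero_cpow (by norm_num)]]
  rw [tendsto_zero_iff_norm_tendsto_zero]
  have h1 : Tendsto (fun z : ℂ => ‖z^2 - 1/4‖) (𝓝 c) (𝓝 0) := by
    have hcont : Continuous fun z : ℂ => ‖z^2 - 1/4‖ :=
      continuous_norm.comp (by fun_prop)
    have := hcont.continuousAt (x := c)
    unfold ContinuousAt at this
    simp only [hc, norm_zero] at this
    exact this
  have h2 : Tendsto (fun z : ℂ => ‖z^2 - 1/4‖ ^ ((1:ℝ)/2)) (𝓝 c) (𝓝 0) := by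
    have hr : ContinuousAt (fun x : ℝ => x ^ ((1:ℝ)/2)) 0 :=
      Real.continuousAt_rpow_const 0 _ (Or.inr (by norm_num))
    have := hr.tendsto.comp h1
    simpa [Function.comp_def, Real.zero_rpow (by norm_num : (1:ℝ)/2 ≠ 0)] using this
  apply squeeze_zero (fun z => norm_nonneg _) (fun z => ?_) h2
  have := Complex.norm_cpow_le (z^2 - 1/4) ((1:ℂ)/2)
  simpa using this

lemma diff_off {z : ℂ} (hz : z ≠ 1/2) (hz' : z ≠ -(1/2)) :
    DifferentiableAt ℂ (fun z : ℂ => Complex.cos ((π:ℂ) * (z^2 - 1/4) ^ ((1:ℂ)/2))) z := by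
  have hne : z^2 - 1/4 ≠ 0 := by
    intro h
    have h0 : (z - 1/2) * (z + 1/2) = 0 := by linear_combination h
    rcases mul_eq_zero.1 h0 with h | h
    · exact hz (by linear_combination h)
    · exact hz' (by linear_combination h)
  have hdq : DifferentiableAt ℂ (fun z : ℂ => z^2 - 1/4) z := by fun_prop
  by_cases hs : (z^2 - 1/4 : ℂ) ∈ Complex.slitPlane
  · exact ((hdq.cpow (differentiableAt_const _) hs).const_mul _).ccos
  · have hs2 : (1/4 - z^2 : ℂ) ∈ Complex.slitPlane := by
      rw [Complex.mem_slitPlane_iff] at hs ⊢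
      push_neg at hs
      have him : (z^2 - (1/4:ℂ)).im = 0 := hs.2
      have hre : (z^2 - (1/4:ℂ)).re ≤ 0 := hs.1
      have hre' : (z^2 - (1/4:ℂ)).re ≠ 0 := by
        intro h0
        exact hne (Complex.ext h0 him)
      left
      have : ((1:ℂ)/4 - z^2) = -(z^2 - 1/4) := by ring
      rw [this, Complex.neg_re]
      cases lt_or_eq_of_le hre with
      | inl h => linarith
      | inr h => exact absurd h hre'
    have hrepr : (fun z : ℂ => Complex.cos ((π:ℂ) * (z^2 - 1/4) ^ ((1:ℂ)/2))) =
        fun z : ℂ => Complex.cos ((π:ℂ) * (Complex.I * (1/4 - z^2) ^ ((1:ℂ)/2))) := by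
      funext u
      exact cos_branch (by rw [mul_pow, Complex.I_sq, sq_half]; ring)
    rw [hrepr]
    have hdq2 : DifferentiableAt ℂ (fun z : ℂ => (1:ℂ)/4 - z^2) z := by fun_prop
    exact ((((hdq2.cpow (differentiableAt_const _) hs2)).const_mul _).const_mul _).ccos

lemma diff_all : Differentiable ℂ (fun z : ℂ => Complex.cos ((π:ℂ) * (z^2 - 1/4) ^ ((1:ℂ)/2))) := by
  intro z
  by_cases h1 : z = 1/2 ∨ z = -(1/2)
  · have hc : z^2 - 1/4 = 0 := by
      rcases h1 with h | h <;> rw [h] <;> ring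
    apply (Complex.analyticAt_of_differentiable_on_punctured_nhds_of_continuousAt ?_
      (contAux hc)).differentiableAt
    have hmem : ∀ᶠ w in 𝓝[≠] z, w ≠ 1/2 ∧ w ≠ -(1/2) → DifferentiableAt ℂ
        (fun z : ℂ => Complex.cos ((π:ℂ) * (z^2 - 1/4) ^ ((1:ℂ)/2))) w :=
      Eventually.of_forall (fun w hw => diff_off hw.1 hw.2)
    have hself : ∀ᶠ w in 𝓝[≠] z, w ≠ z := eventually_mem_nhdsWithin
    rcases h1 with h | h
    · have hother : ∀ᶠ w in 𝓝[≠] z, w ≠ -(1/2) := by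
        apply eventually_nhdsWithin_of_eventually_nhds
        apply eventually_ne_nhds
        rw [h]; norm_num
      filter_upwards [hmem, hself, hother] with w hmem hself hother
      exact hmem ⟨h ▸ hself, hother⟩
    · have hother : ∀ᶠ w in 𝓝[≠] z, w ≠ 1/2 := by
        apply eventually_nhdsWithin_of_eventually_nhds
        apply eventually_ne_nhds
        rw [h]; norm_num
      filter_upwards [hmem, hself, hother] with w hmem hself hother
      exact hmem ⟨hother, h ▸ hself⟩
  · push_neg at h1
    exact diff_off h1.1 h1.2

lemma im_sq_bounds {z w : ℂ} (h : w^2 = z^2 - 1/4) (hy : 1 ≤ |z.im|) :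
    |z.im| ≤ |w.im| ∧ |w.im| ≤ |z.im| + 1/2 := by
  set a := w.re with ha'
  set b := w.im with hb'
  set x := z.re with hx'
  set y := z.im with hy'
  have h1 : a^2 - b^2 = x^2 - y^2 - 1/4 := by
    have := congrArg Complex.re h
    simpa [pow_two, Complex.mul_re, Complex.sub_re, ← ha', ← hb', ← hx', ← hy'] using this
  have h2 : a * b = x * y := by
    have := congrArg Complex.im h
    simp only [pow_two, Complex.mul_im, Complex.sub_im] at this
    simp only [← ha', ← hb', ← hx', ← hy'] at this
    norm_num at this
    linarith
  have hQ : 1 ≤ y^2 := by nlinarith [_root_.sq_abs y, abs_nonneg y]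
  have hA : 0 ≤ b^2 + x^2 - y^2 - 1/4 := by nlinarith [sq_nonneg a]
  have hE : (b^2 + x^2 - y^2 - 1/4) * b^2 = x^2 * y^2 := by
    linear_combination (a*b + x*y) * h2 - b^2 * h1
  have hb2 : y^2 ≤ b^2 := by nlinarith [hE, hA, hQ, sq_nonneg x, sq_nonneg b]
  have hb2' : b^2 ≤ y^2 + 1/3 := by nlinarith [hE, hA, hQ, hb2, sq_nonneg x]
  constructor
  · have := Real.sqrt_le_sqrt hb2
    rwa [Real.sqrt_sq_eq_abs, Real.sqrt_sq_eq_abs] at this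
  · have h3 : b^2 ≤ (|y| + 1/2)^2 := by nlinarith [_root_.sq_abs y]
    have := Real.sqrt_le_sqrt h3
    rwa [Real.sqrt_sq_eq_abs, Real.sqrt_sq (by positivity)] at this

lemma abs_cos_bounds (ζ : ℂ) :
    (Real.exp |ζ.im| - Real.exp (-|ζ.im|))/2 ≤ ‖Complex.cos ζ‖ ∧
    ‖Complex.cos ζ‖ ≤ Real.exp |ζ.im| := by
  have hcos : Complex.cos ζ = (Complex.exp (ζ * Complex.I) + Complex.exp (-ζ * Complex.I)) / 2 :=
    rfl
  have e1 : ‖Complex.exp (ζ * Complex.I)‖ = Real.exp (-ζ.im) := by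
    rw [Complex.norm_exp]; congr 1; simp [Complex.mul_re]
  have e2 : ‖Complex.exp (-ζ * Complex.I)‖ = Real.exp (ζ.im) := by
    rw [Complex.norm_exp]; congr 1; simp [Complex.mul_re]
  have habs : ‖Complex.cos ζ‖ =
      ‖Complex.exp (ζ * Complex.I) + Complex.exp (-ζ * Complex.I)‖ / 2 := by
    rw [hcos, norm_div]
    norm_num
  constructor
  · rw [habs]
    have t1 : ‖Complex.exp (-ζ * Complex.I)‖ - ‖Complex.exp (ζ * Complex.I)‖ ≤
        ‖Complex.exp (-ζ * Complex.I) + Complex.exp (ζ * Complex.I)‖ := by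
      simpa using norm_sub_norm_le (Complex.exp (-ζ * Complex.I)) (-Complex.exp (ζ * Complex.I))
    have t2 : ‖Complex.exp (ζ * Complex.I)‖ - ‖Complex.exp (-ζ * Complex.I)‖ ≤
        ‖Complex.exp (ζ * Complex.I) + Complex.exp (-ζ * Complex.I)‖ := by
      simpa using norm_sub_norm_le (Complex.exp (ζ * Complex.I)) (-Complex.exp (-ζ * Complex.I))
    rw [e1, e2] at t1 t2
    rw [add_comm] at t1
    rcases abs_cases ζ.im with ⟨he, _⟩ | ⟨he, _⟩ <;> rw [he] <;>
      [linarith; (rw [neg_neg]; linarith)]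
  · rw [habs]
    have := norm_add_le (Complex.exp (ζ * Complex.I)) (Complex.exp (-ζ * Complex.I))
    rw [e1, e2] at this
    have b1 : Real.exp (-ζ.im) ≤ Real.exp |ζ.im| := Real.exp_le_exp.2 (neg_le_abs _)
    have b2 : Real.exp (ζ.im) ≤ Real.exp |ζ.im| := Real.exp_le_exp.2 (le_abs_self _)
    linarith

lemma bounds_main {z : ℂ} (hy : 1 ≤ |z.im|) :
    (1/4) * Real.exp (π * |z.im|) ≤
      ‖Complex.cos ((π:ℂ) * (z^2 - 1/4) ^ ((1:ℂ)/2))‖ ∧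
    ‖Complex.cos ((π:ℂ) * (z^2 - 1/4) ^ ((1:ℂ)/2))‖ ≤
      Real.exp (π/2) * Real.exp (π * |z.im|) := by
  set w := (z^2 - 1/4) ^ ((1:ℂ)/2) with hw
  have hw2 : w^2 = z^2 - 1/4 := sq_half _
  obtain ⟨hlo, hhi⟩ := im_sq_bounds hw2 hy
  have him : ((π:ℂ) * w).im = π * w.im := by
    simp [Complex.mul_im]
  obtain ⟨hc1, hc2⟩ := abs_cos_bounds ((π:ℂ) * w)
  rw [him] at hc1 hc2
  have hpi : (0:ℝ) < π := Real.pi_pos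
  have hpi3 : (3:ℝ) ≤ π := by linarith [Real.pi_gt_three]
  have habs : |π * w.im| = π * |w.im| := by rw [abs_mul, abs_of_pos hpi]
  rw [habs] at hc1 hc2
  have hmono : Real.exp (π * |z.im|) ≤ Real.exp (π * |w.im|) :=
    Real.exp_le_exp.2 (by nlinarith)
  constructor
  · have h2 : Real.exp (-(π * |w.im|)) ≤ 1 := by
      rw [Real.exp_le_one_iff]
      exact neg_nonpos.2 (by positivity)
    have h3 : 2 ≤ Real.exp (π * |z.im|) := by
      have := Real.add_one_le_exp (π * |z.im|)
      nlinarith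
    linarith
  · calc ‖Complex.cos ((π:ℂ) * w)‖ ≤ Real.exp (π * |w.im|) := hc2
      _ ≤ Real.exp (π/2) * Real.exp (π * |z.im|) := by
          rw [← Real.exp_add]
          apply Real.exp_le_exp.2
          nlinarith

def sq2 (k : ℕ) : ℝ := Real.sqrt ((k:ℝ)^2 + k + 1/2)

lemma sq2_sq (k : ℕ) : (sq2 k)^2 = (k:ℝ)^2 + k + 1/2 :=
  Real.sq_sqrt (by positivity)

lemma sq2_nonneg (k : ℕ) : 0 ≤ sq2 k := Real.sqrt_nonneg _

lemma sq2_half (k : ℕ) : 1/2 ≤ sq2 k := by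
  rw [sq2, Real.le_sqrt (by norm_num) (by positivity)]
  have : (0:ℝ) ≤ (k:ℝ) := Nat.cast_nonneg k
  nlinarith

lemma sq2_le (k : ℕ) : sq2 k ≤ k + 1 := by
  rw [sq2, show ((k:ℝ) + 1) = Real.sqrt (((k:ℝ)+1)^2) by rw [Real.sqrt_sq (by positivity)]]
  apply Real.sqrt_le_sqrt
  nlinarith

lemma sq2_gap (k : ℕ) : sq2 k + 2/3 ≤ sq2 (k+1) := by
  simp only [sq2]
  rw [Real.le_sqrt (by positivity) (by positivity)]
  push_cast
  have hsq : (Real.sqrt ((k:ℝ)^2 + k + 1/2))^2 = (k:ℝ)^2 + k + 1/2 := sq2_sq k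
  have hle : Real.sqrt ((k:ℝ)^2 + k + 1/2) ≤ (k:ℝ) + 1 := sq2_le k
  have hnn : 0 ≤ Real.sqrt ((k:ℝ)^2 + k + 1/2) := Real.sqrt_nonneg _
  nlinarith [Nat.cast_nonneg (α := ℝ) k]

lemma sq2_mono : Monotone sq2 := by
  intro j k hjk
  apply Real.sqrt_le_sqrt
  have : (j:ℝ) ≤ k := Nat.cast_le.2 hjk
  nlinarith [Nat.cast_nonneg (α := ℝ) j]

lemma sq2_sep {j k : ℕ} (h : j ≠ k) : 2/3 ≤ |sq2 j - sq2 k| := by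
  rcases h.lt_or_gt with h | h
  · rw [abs_sub_comm, _root_.abs_of_nonneg (by linarith [sq2_mono h.le])]
    have h1 := sq2_gap j
    have h2 := sq2_mono (Nat.succ_le_of_lt h)
    linarith
  · rw [_root_.abs_of_nonneg (by linarith [sq2_mono h.le])]
    have h1 := sq2_gap k
    have h2 := sq2_mono (Nat.succ_le_of_lt h)
    linarith

lemma sq2_sum (j k : ℕ) : 2/3 ≤ sq2 j + sq2 k := by
  have := sq2_half j; have := sq2_half k; linarith

lemma deriv_ne {z : ℂ} (hz : Complex.cos ((π:ℂ) * (z^2 - 1/4) ^ ((1:ℂ)/2)) = 0)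
    (hz2 : ∃ k : ℕ, z^2 = (((k:ℝ)^2 + k + 1/2 : ℝ) : ℂ)) :
    deriv (fun z : ℂ => Complex.cos ((π:ℂ) * (z^2 - 1/4) ^ ((1:ℂ)/2))) z ≠ 0 := by
  obtain ⟨k, hk⟩ := hz2
  have hbase : z^2 - 1/4 = (((k:ℝ)^2 + k + 1/4 : ℝ) : ℂ) := by
    rw [hk]; push_cast; ring
  have hpos : (0:ℝ) < (k:ℝ)^2 + k + 1/4 := by positivity
  have hslit : (z^2 - 1/4 : ℂ) ∈ Complex.slitPlane := by
    rw [Complex.mem_slitPlane_iff, hbase]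
    left
    rw [Complex.ofReal_re]
    exact hpos
  have hbne : (z^2 - 1/4 : ℂ) ≠ 0 := by
    rw [hbase]
    exact Complex.ofReal_ne_zero.2 (ne_of_gt hpos)
  have hzne : z ≠ 0 := by
    intro h0
    have hcast : (((k:ℝ)^2 + k + 1/2 : ℝ) : ℂ) = 0 := by rw [← hk, h0]; ring
    have : ((k:ℝ)^2 + k + 1/2 : ℝ) = 0 := by exact_mod_cast hcast
    nlinarith [Nat.cast_nonneg (α := ℝ) k]
  have hd : HasDerivAt (fun z : ℂ => z^2 - 1/4) (2*z) z := by
    simpa using ((hasDerivAt_pow 2 z).sub_const (1/4 : ℂ))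
  have hw := hd.cpow_const (c := (1:ℂ)/2) hslit
  have hm := hw.const_mul ((π:ℂ))
  have hcos := hm.ccos
  rw [hcos.deriv]
  apply mul_ne_zero
  · apply neg_ne_zero.2
    intro hsin
    have := Complex.sin_sq_add_cos_sq ((π:ℂ) * (z^2 - 1/4) ^ ((1:ℂ)/2))
    rw [hsin, hz] at this
    norm_num at this
  · refine mul_ne_zero (Complex.ofReal_ne_zero.2 Real.pi_ne_zero)
      (mul_ne_zero (mul_ne_zero (by norm_num) ?_) (mul_ne_zero two_ne_zero hzne))
    intro hcp
    exact hbne ((Complex.cpow_eq_zero_iff _ _).1 hcp).1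

lemma tsum_rep (z : ℂ) : Complex.cos ((π:ℂ) * (z^2 - 1/4) ^ ((1:ℂ)/2)) =
    ∑' n : ℕ, (-1:ℂ)^n * (π:ℂ)^(2*n) * (z^2 - 1/4)^n / (Nat.factorial (2*n) : ℂ) := by
  rw [Complex.cos_eq_tsum]
  congr 1
  funext n
  rw [mul_pow, pow_mul ((z^2 - 1/4) ^ ((1:ℂ)/2)), sq_half]
  ring

end FresnelAux

open FresnelAux in
/-- `Z₁(λ) = cos(π√(λ² - 1/4))` is a generating function for phase shift at Fresnel
number `𝔣 = 1`. -/
theorem generating_function_fresnel_one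
    (Z₁ : ℂ → ℂ)
    (hZ₁ : ∀ z : ℂ, Z₁ z = Complex.cos ((π : ℂ) * (z ^ 2 - 1 / 4) ^ ((1 : ℂ) / 2))) :
    -- the value is independent of the branch of the square root
    (∀ z w : ℂ, w ^ 2 = z ^ 2 - 1 / 4 → Z₁ z = Complex.cos ((π : ℂ) * w)) ∧
    -- equivalently, Z₁ is given by the everywhere-convergent power series in λ² - 1/4
    (∀ z : ℂ, Z₁ z = ∑' n : ℕ,
      (-1 : ℂ) ^ n * (π : ℂ) ^ (2 * n) * (z ^ 2 - 1 / 4) ^ n / (Nat.factorial (2 * n) : ℂ)) ∧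
    -- Z₁ is a generating function for phase shift at 𝔣 = 1
    IsGeneratingPhase 1 Z₁ ∧
    -- the zero set is exactly {±√(k² + k + 1/2) : k ∈ ℕ}
    {z : ℂ | Z₁ z = 0} =
      {z : ℂ | ∃ k : ℕ, z = (Real.sqrt ((k : ℝ) ^ 2 + k + 1 / 2) : ℂ) ∨
        z = -(Real.sqrt ((k : ℝ) ^ 2 + k + 1 / 2) : ℂ)} ∧
    -- each zero satisfies λ² = l + 1/2 with l = k² + k
    (∀ z : ℂ, Z₁ z = 0 → ∃ k : ℕ, z ^ 2 = ((k : ℂ) ^ 2 + k) + 1 / 2) := by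
  have hZ : Z₁ = fun z : ℂ => Complex.cos ((π : ℂ) * (z ^ 2 - 1 / 4) ^ ((1 : ℂ) / 2)) :=
    funext hZ₁
  subst hZ
  refine ⟨?_, ?_, ?_, ?_, ?_⟩
  · intro z w h
    exact cos_branch h
  · intro z
    exact tsum_rep z
  · refine ⟨⟨diff_all, ?_, ?_⟩, ?_, ?_, ?_⟩
    · -- separated
      refine ⟨2/3, by norm_num, ?_⟩
      intro lam hlam mu hmu hne
      obtain ⟨j, hj⟩ := zero_forward hlam
      obtain ⟨k, hk⟩ := zero_forward hmu
      rcases hj with hj | hj <;> rcases hk with hk | hk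
      · have hjk : j ≠ k := by
          rintro rfl
          exact hne (hj.trans hk.symm)
        rw [hj, hk, ← Complex.ofReal_sub, Complex.norm_real, Real.norm_eq_abs]
        exact sq2_sep hjk
      · rw [hj, hk, show ((Real.sqrt ((j:ℝ)^2 + j + 1/2) : ℂ) -
            -(Real.sqrt ((k:ℝ)^2 + k + 1/2) : ℂ)) =
            ((Real.sqrt ((j:ℝ)^2 + j + 1/2) + Real.sqrt ((k:ℝ)^2 + k + 1/2) : ℝ) : ℂ) by
            push_cast; ring, Complex.norm_real, Real.norm_eq_abs,
          _root_.abs_of_nonneg (by positivity)]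
        exact sq2_sum j k
      · rw [hj, hk, show (-(Real.sqrt ((j:ℝ)^2 + j + 1/2) : ℂ) -
            (Real.sqrt ((k:ℝ)^2 + k + 1/2) : ℂ)) =
            ((-(Real.sqrt ((j:ℝ)^2 + j + 1/2) + Real.sqrt ((k:ℝ)^2 + k + 1/2)) : ℝ) : ℂ) by
            push_cast; ring, Complex.norm_real, Real.norm_eq_abs, abs_neg,
          _root_.abs_of_nonneg (by positivity)]
        exact sq2_sum j k
      · have hjk : j ≠ k := by
          rintro rfl
          exact hne (hj.trans hk.symm)
        rw [hj, hk, show (-(Real.sqrt ((j:ℝ)^2 + j + 1/2) : ℂ) -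
            -(Real.sqrt ((k:ℝ)^2 + k + 1/2) : ℂ)) =
            ((-(Real.sqrt ((j:ℝ)^2 + j + 1/2) - Real.sqrt ((k:ℝ)^2 + k + 1/2)) : ℝ) : ℂ) by
            push_cast; ring, Complex.norm_real, Real.norm_eq_abs, abs_neg]
        exact sq2_sep hjk
    · -- bounds
      refine ⟨Real.exp (π/2), Real.exp_pos _, 1/4, by norm_num, 1, one_pos, ?_⟩
      intro lam hlam
      exact bounds_main hlam
    · -- realZeros
      intro z hz
      obtain ⟨k, hk⟩ := zero_forward hz
      rcases hk with h | h
      · exact ⟨_, h⟩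
      · exact ⟨-(Real.sqrt ((k:ℝ)^2 + k + 1/2)), by rw [h]; push_cast; ring⟩
    · -- simpleZeros
      intro z hz
      exact deriv_ne hz (zero_sq hz)
    · -- quantized
      intro z hz
      obtain ⟨k, hk⟩ := zero_sq hz
      refine ⟨(k:ℤ)^2 + k, ?_⟩
      push_cast at hk ⊢
      rw [hk]
      ring
  · ext z
    simp only [Set.mem_setOf_eq]
    exact ⟨fun h => zero_forward h, fun ⟨k, hk⟩ => zero_backward k hk⟩
  · intro z hz
    obtain ⟨k, hk⟩ := zero_sq hz
    refine ⟨k, ?_⟩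
    push_cast at hk
    linear_combination hk
end
end

section
/- Define the entire function Z₂ : ℂ → ℂ by Z₂(λ) = cos(π√(λ² − 3/4)) (the value independent of the branch of the square root since cosine is even). Then Z₂ is a generating function for phase shift at Fresnel number 𝔣 = 2: Z₂ is of sine-type, its zero set is exactly {λ ∈ ℂ : λ² = k² + k + 1 for some k ∈ ℕ}, all zeros are real and simple, and each zero λ satisfies λ² = 2(l + 1/2) where l = (k² + k)/2 is an integer (k² + k being even for every integer k). -/
open MeasureTheory Complex Filter
open scoped FourierTransform Real Topology

noncomputable section

set_option maxHeartbeats 1000000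

lemma sq_cpow_half (u : ℂ) : (u ^ ((1:ℂ)/2)) ^ 2 = u := by
  rcases eq_or_ne u 0 with rfl | hu
  · rw [Complex.zero_cpow (by norm_num : (1:ℂ)/2 ≠ 0)]; ring
  · simpa [show ((2:ℕ):ℂ)⁻¹ = 1/2 by norm_num] using Complex.cpow_nat_inv_pow u two_ne_zero

lemma abs_cos_bounds (ζ : ℂ) :
    (Real.exp |ζ.im| - Real.exp (-|ζ.im|)) / 2 ≤ ‖Complex.cos ζ‖ ∧
    ‖Complex.cos ζ‖ ≤ Real.exp |ζ.im| := by
  have h : Complex.cos ζ = (Complex.exp (ζ * I) + Complex.exp (-ζ * I)) / 2 := by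
    have := Complex.two_cos ζ; linear_combination this / 2
  have e1 : ‖Complex.exp (ζ * I)‖ = Real.exp (-ζ.im) := by
    rw [Complex.norm_exp]; congr 1; simp [Complex.mul_I_re]
  have e2 : ‖Complex.exp (-ζ * I)‖ = Real.exp ζ.im := by
    rw [Complex.norm_exp]; congr 1; simp [Complex.mul_I_re]
  constructor
  · rw [h, norm_div, Complex.norm_two]
    rw [div_le_div_iff_of_pos_right (by norm_num : (0:ℝ) < 2)]
    rcases le_total 0 ζ.im with hs | hs
    · have key := norm_sub_norm_le (Complex.exp (-ζ * I)) (-Complex.exp (ζ * I))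
      simp only [norm_neg, sub_neg_eq_add] at key
      rw [e1, e2, add_comm] at key
      rw [_root_.abs_of_nonneg hs]
      linarith
    · have key := norm_sub_norm_le (Complex.exp (ζ * I)) (-Complex.exp (-ζ * I))
      simp only [norm_neg, sub_neg_eq_add] at key
      rw [e1, e2] at key
      rw [_root_.abs_of_nonpos hs]
      simp only [neg_neg]; linarith
  · rw [h, norm_div, Complex.norm_two]
    have := norm_add_le (Complex.exp (ζ * I)) (Complex.exp (-ζ * I))
    rw [e1, e2] at this
    have h1 : Real.exp (-ζ.im) ≤ Real.exp |ζ.im| := Real.exp_le_exp.2 (neg_le_abs _)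
    have h2 : Real.exp ζ.im ≤ Real.exp |ζ.im| := Real.exp_le_exp.2 (le_abs_self _)
    linarith


/-- `Z₂(λ) = cos(π√(λ² - 3/4))` is a generating function for phase shift at Fresnel
number `𝔣 = 2`. -/
theorem generating_function_fresnel_two
    (Z₂ : ℂ → ℂ)
    (hZ₂ : ∀ z : ℂ, Z₂ z = Complex.cos ((π : ℂ) * (z ^ 2 - 3 / 4) ^ ((1 : ℂ) / 2))) :
    -- the value is independent of the branch of the square root
    (∀ z w : ℂ, w ^ 2 = z ^ 2 - 3 / 4 → Z₂ z = Complex.cos ((π : ℂ) * w)) ∧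
    -- Z₂ is a generating function for phase shift at 𝔣 = 2
    IsGeneratingPhase 2 Z₂ ∧
    -- the zero set is exactly {λ : λ² = k² + k + 1 for some k ∈ ℕ}
    {z : ℂ | Z₂ z = 0} = {z : ℂ | ∃ k : ℕ, z ^ 2 = (k : ℂ) ^ 2 + k + 1} ∧
    -- each zero satisfies λ² = 2(l + 1/2) with l = (k² + k)/2 an integer
    (∀ z : ℂ, Z₂ z = 0 → ∃ k : ℕ, ∃ l : ℤ,
      2 * (l : ℤ) = (k : ℤ) ^ 2 + k ∧ z ^ 2 = 2 * ((l : ℂ) + 1 / 2)) := by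
  have hπ : (π : ℂ) ≠ 0 := Complex.ofReal_ne_zero.2 Real.pi_ne_zero
  -- branch independence
  have branch : ∀ z w : ℂ, w ^ 2 = z ^ 2 - 3 / 4 → Z₂ z = Complex.cos ((π:ℂ) * w) := by
    intro z w hw
    have hs : ((z ^ 2 - 3/4) ^ ((1:ℂ)/2)) ^ 2 = z ^ 2 - 3/4 := sq_cpow_half _
    set s := (z ^ 2 - 3/4) ^ ((1:ℂ)/2)
    have h2 : (w - s) * (w + s) = 0 := by linear_combination hw - hs
    rcases mul_eq_zero.1 h2 with h | h
    · rw [hZ₂ z, sub_eq_zero.mp h]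
    · have hws : w = -s := by linear_combination h
      rw [hZ₂ z, hws, mul_neg, Complex.cos_neg]
  -- zero set characterization
  have zeroset : ∀ z : ℂ, Z₂ z = 0 ↔ ∃ k : ℕ, z ^ 2 = (k:ℂ)^2 + k + 1 := by
    intro z
    rw [hZ₂ z, Complex.cos_eq_zero_iff]
    have hs : ((z ^ 2 - 3/4) ^ ((1:ℂ)/2)) ^ 2 = z ^ 2 - 3/4 := sq_cpow_half _
    set s := (z ^ 2 - 3/4) ^ ((1:ℂ)/2)
    constructor
    · rintro ⟨m, hm⟩
      have hm' : (π:ℂ) * s = (π:ℂ) * ((m:ℂ) + 1/2) := by rw [hm]; ring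
      have hsm : s = (m:ℂ) + 1/2 := mul_left_cancel₀ hπ hm'
      have hz2 : z ^ 2 = (m:ℂ)^2 + m + 1 := by
        have := hs; rw [hsm] at this; linear_combination -this
      rcases le_or_gt 0 m with hm0 | hm0
      · refine ⟨m.toNat, ?_⟩
        have : ((m.toNat : ℤ) : ℂ) = (m : ℂ) := by rw [Int.toNat_of_nonneg hm0]
        push_cast at this ⊢
        rw [hz2, ← this]
      · refine ⟨(-m-1).toNat, ?_⟩
        have h1 : (((-m-1).toNat : ℤ) : ℂ) = -(m:ℂ) - 1 := by
          rw [Int.toNat_of_nonneg (by omega)]; push_cast; ring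
        push_cast at h1 ⊢
        rw [hz2, h1]; ring
    · rintro ⟨k, hk⟩
      have hs2 : (s - ((k:ℂ)+1/2)) * (s + ((k:ℂ)+1/2)) = 0 := by
        rw [hk] at hs; linear_combination hs
      rcases mul_eq_zero.1 hs2 with h | h
      · refine ⟨(k:ℤ), ?_⟩
        rw [sub_eq_zero.mp h]; push_cast; ring
      · refine ⟨-(k:ℤ)-1, ?_⟩
        have : s = -((k:ℂ)+1/2) := by linear_combination h
        rw [this]; push_cast; ring
  -- real zeros
  have realZ : ∀ z : ℂ, Z₂ z = 0 → ∃ x : ℝ, z = (x : ℂ) := by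
    intro z hz
    obtain ⟨k, hk⟩ := (zeroset z).1 hz
    set r : ℝ := Real.sqrt ((k:ℝ)^2 + k + 1) with hr_def
    have hr : ((r:ℂ))^2 = (k:ℂ)^2 + k + 1 := by
      have h1 : r^2 = (k:ℝ)^2 + k + 1 := Real.sq_sqrt (by positivity)
      rw [← Complex.ofReal_pow, h1]; push_cast; ring
    have h2 : (z - r) * (z + r) = 0 := by linear_combination hk - hr
    rcases mul_eq_zero.1 h2 with h | h
    · exact ⟨r, by linear_combination h⟩
    · exact ⟨-r, by push_cast; linear_combination h⟩
  -- quantization with k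
  have quant : ∀ z : ℂ, Z₂ z = 0 → ∃ k : ℕ, ∃ l : ℤ,
      2 * (l : ℤ) = (k : ℤ) ^ 2 + k ∧ z ^ 2 = 2 * ((l : ℂ) + 1 / 2) := by
    intro z hz
    obtain ⟨k, hk⟩ := (zeroset z).1 hz
    obtain ⟨l, hl⟩ := Int.even_mul_succ_self (k:ℤ)
    have hl2 : 2 * l = (k:ℤ)^2 + k := by linarith [hl]; 
    refine ⟨k, l, hl2, ?_⟩
    have hlC : 2 * (l:ℂ) = (k:ℂ)^2 + k := by exact_mod_cast congrArg (fun n : ℤ => (n:ℂ)) hl2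
    rw [hk]; linear_combination -hlC
  -- differentiability away from branch points
  have hF : Z₂ = fun w : ℂ => Complex.cos ((π:ℂ) * (w^2 - 3/4) ^ ((1:ℂ)/2)) := funext hZ₂
  have hdiff_ne : ∀ z : ℂ, z^2 - 3/4 ≠ 0 → DifferentiableAt ℂ Z₂ z := by
    intro z hz
    by_cases hsl : z^2 - 3/4 ∈ Complex.slitPlane
    · rw [hF]
      have h1 : HasDerivAt (fun w : ℂ => w^2 - 3/4) (2*z) z := by
        simpa using ((hasDerivAt_pow 2 z).sub_const (3/4 : ℂ))
      have h2 := (h1.cpow_const (c := (1:ℂ)/2) hsl).const_mul (π:ℂ)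
      exact ((Complex.hasDerivAt_cos _).comp z h2).differentiableAt
    · -- z^2 - 3/4 is a negative real; use the other branch
      have hsl' : 3/4 - z^2 ∈ Complex.slitPlane := by
        rw [Complex.mem_slitPlane_iff] at hsl ⊢
        push_neg at hsl
        rcases hsl with ⟨h1, h2⟩
        have hre : (z^2 - 3/4).re < 0 := by
          rcases lt_or_eq_of_le h1 with h | h
          · exact h
          · exact absurd (Complex.ext (by rw [Complex.zero_re]; exact h) (by rw [Complex.zero_im]; exact h2)) hz
        left
        have : (3/4 - z^2 : ℂ) = -(z^2 - 3/4) := by ring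
        rw [this, Complex.neg_re]; linarith
      have hG : Z₂ = fun w : ℂ => Complex.cos ((π:ℂ) * (Complex.I * (3/4 - w^2) ^ ((1:ℂ)/2))) := by
        funext w
        apply branch
        have := sq_cpow_half (3/4 - w^2)
        rw [mul_pow, Complex.I_sq, this]; ring
      rw [hG]
      have h1 : HasDerivAt (fun w : ℂ => 3/4 - w^2) (-(2*z)) z := by
        simpa using ((hasDerivAt_pow 2 z).const_sub (3/4 : ℂ))
      have h2 := ((h1.cpow_const (c := (1:ℂ)/2) hsl').const_mul Complex.I).const_mul (π:ℂ)
      exact ((Complex.hasDerivAt_cos _).comp z h2).differentiableAt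
  -- entire
  have entire : Differentiable ℂ Z₂ := by
    intro z₀
    by_cases h0 : z₀^2 - 3/4 = 0
    · have hz₀ : z₀ ≠ 0 := by
        intro h; rw [h] at h0; norm_num at h0
      have hzne : z₀ ≠ -z₀ := by
        intro h; apply hz₀; have : (2:ℂ) * z₀ = 0 := by linear_combination h
        simpa using this
      have hev : ∀ᶠ w in 𝓝[≠] z₀, DifferentiableAt ℂ Z₂ w := by
        have hmem : {w : ℂ | w ≠ -z₀} ∈ 𝓝 z₀ := by
          exact isOpen_compl_singleton.mem_nhds (by simpa [Set.mem_compl_iff] using hzne)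
        filter_upwards [mem_nhdsWithin_of_mem_nhds hmem, self_mem_nhdsWithin] with w hw1 hw2
        apply hdiff_ne
        intro hw0
        have hww : (w - z₀) * (w + z₀) = 0 := by linear_combination hw0 - h0
        rcases mul_eq_zero.1 hww with h | h
        · exact hw2 (by simp only [Set.mem_singleton_iff]; linear_combination h)
        · exact hw1 (by linear_combination h)
      have hc : ContinuousAt Z₂ z₀ := by
        rw [hF]
        have hcp : ContinuousAt (fun p : ℂ × ℂ => p.1 ^ p.2) (z₀^2 - 3/4, (1:ℂ)/2) := by
          rw [h0]
          exact Complex.continuousAt_cpow_zero_of_re_pos (by norm_num)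
        have hinner : ContinuousAt (fun w : ℂ => ((w^2 - 3/4 : ℂ), (1:ℂ)/2)) z₀ :=
          ContinuousAt.prodMk (by fun_prop) continuousAt_const
        have hcpow : ContinuousAt (fun w : ℂ => (w^2 - 3/4) ^ ((1:ℂ)/2)) z₀ :=
          ContinuousAt.comp (g := fun p : ℂ × ℂ => p.1 ^ p.2)
            (f := fun w : ℂ => ((w^2 - 3/4 : ℂ), (1:ℂ)/2)) hcp hinner
        exact Complex.continuous_cos.continuousAt.comp (continuousAt_const.mul hcpow)
      exact (Complex.analyticAt_of_differentiable_on_punctured_nhds_of_continuousAt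
        hev hc).differentiableAt
    · exact hdiff_ne z₀ h0
  -- sine-type bounds
  have hπpos : (0:ℝ) < π := Real.pi_pos
  have bounds : ∃ A > 0, ∃ B > 0, ∃ H > 0, ∀ lam : ℂ, H ≤ |lam.im| →
      B * Real.exp (π * |lam.im|) ≤ ‖Z₂ lam‖ ∧
      ‖Z₂ lam‖ ≤ A * Real.exp (π * |lam.im|) := by
    refine ⟨Real.exp π, Real.exp_pos _, (Real.exp (-π) - Real.exp (-(2*π)))/2, by
      have := Real.exp_lt_exp.2 (show -(2*π) < -π by linarith); linarith, 2, by norm_num, ?_⟩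
    intro lam hlam
    set L := |lam.im| with hL_def
    have hL2 : 2 ≤ L := hlam
    have hs : ((lam ^ 2 - 3/4) ^ ((1:ℂ)/2)) ^ 2 = lam ^ 2 - 3/4 := sq_cpow_half _
    set s := (lam ^ 2 - 3/4) ^ ((1:ℂ)/2)
    have habs : ‖s - lam‖ * ‖s + lam‖ = 3/4 := by
      rw [← norm_mul]
      have : (s - lam) * (s + lam) = -(3/4 : ℂ) := by linear_combination hs
      rw [this]
      simp
    -- |s.im| is within 1 of L
    have him : L - 1 ≤ |s.im| ∧ |s.im| ≤ L + 1 := by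
      have hcase : ‖s - lam‖ ≤ 1 ∨ ‖s + lam‖ ≤ 1 := by
        by_contra hcon
        push_neg at hcon
        nlinarith [hcon.1, hcon.2, norm_nonneg (s - lam), norm_nonneg (s + lam)]
      rcases hcase with h | h
      · have h1 : |s.im - lam.im| ≤ 1 := by
          have := Complex.abs_im_le_norm (s - lam)
          rw [Complex.sub_im] at this; linarith
        have h2 := abs_abs_sub_abs_le_abs_sub s.im lam.im
        rw [abs_le] at h2
        exact ⟨by rw [hL_def]; linarith [h2.1], by rw [hL_def]; linarith [h2.2]⟩
      · have h1 : |s.im + lam.im| ≤ 1 := by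
          have := Complex.abs_im_le_norm (s + lam)
          rw [Complex.add_im] at this; linarith
        have h2 := abs_abs_sub_abs_le_abs_sub s.im (-lam.im)
        rw [sub_neg_eq_add, abs_neg] at h2
        rw [abs_le] at h2
        exact ⟨by rw [hL_def]; linarith [h2.1], by rw [hL_def]; linarith [h2.2]⟩
      -- the value of Z₂
    have hZval : Z₂ lam = Complex.cos ((π:ℂ) * s) := hZ₂ lam
    have himz : |((π:ℂ) * s).im| = π * |s.im| := by
      have : ((π:ℂ) * s).im = π * s.im := by
        simp [Complex.mul_im]
      rw [this, abs_mul, abs_of_pos hπpos]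
    obtain ⟨hlow, hup⟩ := abs_cos_bounds ((π:ℂ) * s)
    rw [himz] at hlow hup
    rw [hZval]
    constructor
    · -- lower bound
      have e1 : Real.exp (π * L) * Real.exp (-π) ≤ Real.exp (π * |s.im|) := by
        rw [← Real.exp_add]
        exact Real.exp_le_exp.2 (by nlinarith [him.1])
      have e2 : Real.exp (-(π * |s.im|)) ≤ 1 := by
        rw [Real.exp_le_one_iff]
        nlinarith [him.1, abs_nonneg s.im]
      have e3 : (1:ℝ) ≤ Real.exp (-(2*π)) * Real.exp (π * L) := by
        rw [← Real.exp_add, ← Real.exp_zero]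
        exact Real.exp_le_exp.2 (by nlinarith)
      nlinarith [hlow]
    · -- upper bound
      have e1 : Real.exp (π * |s.im|) ≤ Real.exp π * Real.exp (π * L) := by
        rw [← Real.exp_add]
        exact Real.exp_le_exp.2 (by nlinarith [him.2])
      linarith
  -- separation
  have separated : ∃ c > 0, ∀ lam ∈ {z : ℂ | Z₂ z = 0}, ∀ mu ∈ {z : ℂ | Z₂ z = 0},
      lam ≠ mu → c ≤ ‖lam - mu‖ := by
    refine ⟨1/2, by norm_num, ?_⟩
    intro lam hlam mu hmu hne
    obtain ⟨x, rfl⟩ := realZ lam hlam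
    obtain ⟨y, rfl⟩ := realZ mu hmu
    obtain ⟨k, hk⟩ := (zeroset _).1 hlam
    obtain ⟨j, hj⟩ := (zeroset _).1 hmu
    have hxr : x^2 = (k:ℝ)^2 + k + 1 := by exact_mod_cast hk
    have hyr : y^2 = (j:ℝ)^2 + j + 1 := by exact_mod_cast hj
    have hxy : x ≠ y := fun h => hne (by rw [h])
    rw [← Complex.ofReal_sub, Complex.norm_real, Real.norm_eq_abs]
    have key : ∀ (a b : ℕ) (u v : ℝ), u^2 = (a:ℝ)^2 + a + 1 → v^2 = (b:ℝ)^2 + b + 1 →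
        a < b → (1:ℝ)/2 ≤ |u - v| := by
      intro a b u v hu hv hab
      have h1 : |u| ≤ (a:ℝ) + 1 := by
        have := _root_.sq_abs u; nlinarith [abs_nonneg u]
      have h2 : |v| ≤ (b:ℝ) + 1 := by
        have := _root_.sq_abs v; nlinarith [abs_nonneg v]
      have h3 : (a:ℝ) + 1 ≤ b := by exact_mod_cast Nat.succ_le_of_lt hab
      have h4 : (|v| - |u|) * (|v| + |u|) = (b:ℝ)^2 + b - a^2 - a := by
        have hu' := _root_.sq_abs u; have hv' := _root_.sq_abs v
        linear_combination hv' + hv - hu' - hu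
      have h7 : (a:ℝ) + b + 1 ≤ (b:ℝ)^2 + b - a^2 - a := by nlinarith [h3, Nat.cast_nonneg (α := ℝ) a]
      have h8 : (1:ℝ) ≤ |v| := by
        have := _root_.sq_abs v; nlinarith [abs_nonneg v]
      have h5 : (1:ℝ)/2 ≤ |v| - |u| := by
        nlinarith [abs_nonneg u, abs_nonneg v, h4, h7, h8, h1, h2, h3]
      calc (1:ℝ)/2 ≤ |v| - |u| := h5
        _ ≤ |v - u| := abs_sub_abs_le_abs_sub v u
        _ = |u - v| := abs_sub_comm v u
    rcases lt_trichotomy k j with h | h | h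
    · exact key k j x y hxr hyr h
    · -- same k: y = -x
      subst h
      have : (x - y) * (x + y) = 0 := by linear_combination hxr - hyr
      rcases mul_eq_zero.1 this with h' | h'
      · exact absurd (by linarith : x = y) hxy
      · have hy : y = -x := by linarith
        rw [hy]
        have : |x - -x| = 2 * |x| := by rw [sub_neg_eq_add, ← two_mul, abs_mul]; norm_num
        rw [this]
        nlinarith [_root_.sq_abs x, abs_nonneg x]
    · rw [abs_sub_comm]; exact key j k y x hyr hxr h
  -- simple zeros
  have simpleZ : ∀ z : ℂ, Z₂ z = 0 → deriv Z₂ z ≠ 0 := by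
    intro z hz
    obtain ⟨k, hk⟩ := (zeroset z).1 hz
    have hune : z^2 - 3/4 = (((k:ℝ)^2 + k + 1/4 : ℝ) : ℂ) := by
      rw [hk]; push_cast; ring
    have hupos : (0:ℝ) < (k:ℝ)^2 + k + 1/4 := by positivity
    have hslit : z^2 - 3/4 ∈ Complex.slitPlane := by
      rw [hune]
      exact Complex.mem_slitPlane_iff.2 (Or.inl (by rw [Complex.ofReal_re]; exact hupos))
    have h1 : HasDerivAt (fun w : ℂ => w^2 - 3/4) (2*z) z := by
      simpa using ((hasDerivAt_pow 2 z).sub_const (3/4 : ℂ))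
    have h2 := (h1.cpow_const (c := (1:ℂ)/2) hslit).const_mul (π:ℂ)
    have h3 := (Complex.hasDerivAt_cos ((π:ℂ) * (z^2-3/4)^((1:ℂ)/2))).comp z h2
    have hder : deriv Z₂ z = -Complex.sin ((π:ℂ) * (z^2-3/4)^((1:ℂ)/2)) *
        ((π:ℂ) * ((1:ℂ)/2 * (z^2-3/4)^((1:ℂ)/2 - 1) * (2*z))) := by
      rw [hF]; exact h3.deriv
    rw [hder]
    have hcos0 : Complex.cos ((π:ℂ) * (z^2-3/4)^((1:ℂ)/2)) = 0 := by rw [← hZ₂ z]; exact hz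
    have hsin : Complex.sin ((π:ℂ) * (z^2-3/4)^((1:ℂ)/2)) ≠ 0 := by
      intro h0
      have hpy := Complex.sin_sq_add_cos_sq ((π:ℂ) * (z^2-3/4)^((1:ℂ)/2))
      rw [h0, hcos0] at hpy
      norm_num at hpy
    have hzne : z ≠ 0 := by
      intro h0
      rw [h0] at hk
      have h0' : (0:ℂ) = (k:ℂ)^2 + k + 1 := by rw [← hk]; norm_num
      have h' : (0:ℝ) = (k:ℝ)^2 + k + 1 := by exact_mod_cast h0'
      nlinarith [sq_nonneg ((k:ℝ))]
    have hbne : (z^2 - 3/4 : ℂ) ≠ 0 := by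
      rw [hune]
      exact Complex.ofReal_ne_zero.2 hupos.ne'
    have hcne : (z^2-3/4 : ℂ)^((1:ℂ)/2 - 1) ≠ 0 := by
      simp [Complex.cpow_eq_zero_iff, hbne]
    apply mul_ne_zero
    · exact neg_ne_zero.2 hsin
    · exact mul_ne_zero hπ
        (mul_ne_zero (mul_ne_zero (by norm_num) hcne) (mul_ne_zero two_ne_zero hzne))
  refine ⟨branch, ⟨⟨entire, separated, bounds⟩, realZ, simpleZ, ?_⟩, ?_, quant⟩
  · intro z hz
    obtain ⟨k, l, _, h2⟩ := quant z hz
    refine ⟨l, ?_⟩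
    rw [h2]; norm_num
  · ext z
    simp only [Set.mem_setOf_eq]
    exact zeroset z

end
end
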